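/- Let i be a positive integer, let (X_l)_{l≥1} be a sequence of i.i.d. real-valued random variables with E[|X₁|^i] < ∞, and let N be a ℕ-valued random variable with E[N^i] < ∞, independent of the sequence (X_l). Then the randomly stopped sum S_N = X₁ + ⋯ + X_N satisfies E[S_N^i] = ∑_{π∈Π_i} g_{(|π|)} ∏_{B∈π} m_{|B|}, where g_{(k)} = E[N(N−1)⋯(N−k+1)] denotes the k-th factorial moment of N and m_r = E[X₁^r]. -/

import Mathlib

open Finset MeasureTheory ProbabilityTheory

open ENNReal NNReal


lemma descFactorial_cast_real (n k : ℕ) :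
    (n.descFactorial k : ℝ) = ∏ j ∈ Finset.range k, ((n : ℝ) - (j : ℝ)) := by
  rcases le_or_gt k n with h | h
  · rw [Nat.descFactorial_eq_prod_range, Nat.cast_prod]
    refine Finset.prod_congr rfl fun j hj => ?_
    rw [Finset.mem_range] at hj
    rw [Nat.cast_sub (le_of_lt (lt_of_lt_of_le hj h))]
  · rw [Nat.descFactorial_eq_zero_iff_lt.mpr h, Nat.cast_zero]
    exact (Finset.prod_eq_zero (Finset.mem_range.mpr h) (by simp)).symm


lemma indep_integral_prod {Ω : Type*} [MeasurableSpace Ω] {μ : Measure Ω} [IsProbabilityMeasure μ]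
    {Y : ℕ → Ω → ℝ} (hmeas : ∀ l, Measurable (Y l))
    (hindep : iIndepFun Y μ)
    (hint : ∀ c, Integrable (Y c) μ) (s : Finset ℕ) :
    Integrable (fun ω => ∏ c ∈ s, Y c ω) μ ∧
      ∫ ω, ∏ c ∈ s, Y c ω ∂μ = ∏ c ∈ s, ∫ ω, Y c ω ∂μ := by
  classical
  induction s using Finset.induction with
  | empty => simp
  | @insert a s ha ih =>
    have hind : IndepFun (∏ j ∈ s, Y j) (Y a) μ :=
      hindep.indepFun_finsetProd_of_notMem hmeas ha
    have hps : (∏ j ∈ s, Y j) = fun ω => ∏ c ∈ s, Y c ω := by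
      funext ω; simp [Finset.prod_apply]
    rw [hps] at hind
    have hint2 : Integrable (fun ω => (∏ c ∈ s, Y c ω) * Y a ω) μ := by
      have := hind.integrable_mul ih.1 (hint a)
      exact this
    constructor
    · refine (integrable_congr ?_).mp hint2
      filter_upwards with ω
      rw [Finset.prod_insert ha, mul_comm]
    · have h1 : ∫ ω, ∏ c ∈ insert a s, Y c ω ∂μ = ∫ ω, (∏ c ∈ s, Y c ω) * Y a ω ∂μ := by
        refine integral_congr_ae ?_
        filter_upwards with ω
        rw [Finset.prod_insert ha, mul_comm]
      have h2 := hind.integral_fun_mul_eq_mul_integral ih.1.aestronglyMeasurable (hint a).aestronglyMeasurable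
      rw [h1, Finset.prod_insert ha, mul_comm (∫ ω, Y a ω ∂μ)]
      simpa [Pi.mul_apply] using h2
      |>.trans (by rw [ih.2])


lemma indep_lintegral_prod {Ω : Type*} [MeasurableSpace Ω] {μ : Measure Ω} [IsProbabilityMeasure μ]
    {g : ℕ → Ω → ℝ≥0∞} (hmeas : ∀ l, Measurable (g l))
    (hindep : iIndepFun g μ) (s : Finset ℕ) :
    ∫⁻ ω, ∏ c ∈ s, g c ω ∂μ = ∏ c ∈ s, ∫⁻ ω, g c ω ∂μ := by
  classical
  induction s using Finset.induction with
  | empty => simp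
  | @insert a s ha ih =>
    have hind : IndepFun (∏ j ∈ s, g j) (g a) μ :=
      hindep.indepFun_finsetProd_of_notMem hmeas ha
    have hps : (∏ j ∈ s, g j) = fun ω => ∏ c ∈ s, g c ω := by
      funext ω; simp [Finset.prod_apply]
    rw [hps] at hind
    have hm : Measurable fun ω => ∏ c ∈ s, g c ω := Finset.measurable_prod _ fun c _ => hmeas c
    have := lintegral_mul_eq_lintegral_mul_lintegral_of_indepFun hm (hmeas a) hind
    calc ∫⁻ ω, ∏ c ∈ insert a s, g c ω ∂μ
        = ∫⁻ ω, (∏ c ∈ s, g c ω) * g a ω ∂μ := by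
          refine lintegral_congr fun ω => ?_
          rw [Finset.prod_insert ha, mul_comm]
      _ = (∫⁻ ω, ∏ c ∈ s, g c ω ∂μ) * ∫⁻ ω, g a ω ∂μ := by
          simpa [Pi.mul_apply] using this
      _ = ∏ c ∈ insert a s, ∫⁻ ω, g c ω ∂μ := by
          rw [ih, Finset.prod_insert ha, mul_comm]


variable {i : ℕ}

noncomputable instance kerDec (p : Fin i → ℕ) : DecidableRel (Setoid.ker p).r :=
  fun a b => decidable_of_iff (p a = p b) Iff.rfl

noncomputable def kerPart (p : Fin i → ℕ) : Finpartition (univ : Finset (Fin i)) :=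
  Finpartition.ofSetoid (Setoid.ker p)

lemma mem_kerPart_part {p : Fin i → ℕ} {a b : Fin i} :
    b ∈ (kerPart p).part a ↔ p a = p b :=
  Finpartition.mem_part_ofSetoid_iff_rel

lemma kerPart_const_on {p : Fin i → ℕ} {B : Finset (Fin i)} (hB : B ∈ (kerPart p).parts)
    {a b : Fin i} (ha : a ∈ B) (hb : b ∈ B) : p a = p b := by
  have : B = (kerPart p).part a := ((kerPart p).part_eq_of_mem hB ha).symm
  exact mem_kerPart_part.mp (this ▸ hb)

lemma kerPart_part_eq (p : Fin i → ℕ) (a : Fin i) :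
    (kerPart p).part a = univ.filter fun b => p b = p a := by
  ext b
  simp [mem_kerPart_part, eq_comm]

lemma parts_eq_image_part {α : Type*} [DecidableEq α] [Fintype α]
    (P : Finpartition (univ : Finset α)) : P.parts = univ.image P.part := by
  ext B
  constructor
  · intro hB
    obtain ⟨x, -, hxB⟩ := P.part_surjOn hB
    exact Finset.mem_image.mpr ⟨x, Finset.mem_univ x, hxB⟩
  · rintro hB
    obtain ⟨x, -, rfl⟩ := Finset.mem_image.mp hB
    exact P.part_mem.mpr (Finset.mem_univ x)

lemma card_kerPart_fiber (n : ℕ) (π : Finpartition (univ : Finset (Fin i))) :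
    ((Fintype.piFinset fun _ : Fin i => Finset.range n).filter fun p => kerPart p = π).card
      = n.descFactorial π.parts.card := by
  classical
  have key : ((Fintype.piFinset fun _ : Fin i => Finset.range n).filter
        fun p => kerPart p = π).card = (univ : Finset (↥π.parts ↪ Fin n)).card := by
    refine Finset.card_bij'
      (i := fun p hp => ⟨fun B => ⟨p (π.nonempty_of_mem_parts B.2).choose, ?memlt⟩, ?inj⟩)
      (j := fun g _ => fun j : Fin i => ((g ⟨π.part j, π.part_mem.mpr (Finset.mem_univ j)⟩ : Fin n) : ℕ))
      ?hi ?hj ?leftinv ?rightinv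
    case memlt =>
      rw [Finset.mem_filter, Fintype.mem_piFinset] at hp
      exact Finset.mem_range.mp (hp.1 _)
    case inj =>
      intro B B' hBB'
      rw [Finset.mem_filter] at hp
      have hp2 := hp.2
      simp only [Fin.mk.injEq] at hBB'
      have hxB := (π.nonempty_of_mem_parts B.2).choose_spec
      have hxB' := (π.nonempty_of_mem_parts B'.2).choose_spec
      -- parts of kerPart p
      have hB : B.1 ∈ (kerPart p).parts := hp2 ▸ B.2
      have hB' : B'.1 ∈ (kerPart p).parts := hp2 ▸ B'.2
      have e1 : (kerPart p).part (π.nonempty_of_mem_parts B.2).choose = B.1 :=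
        (kerPart p).part_eq_of_mem hB hxB
      have e2 : (kerPart p).part (π.nonempty_of_mem_parts B'.2).choose = B'.1 :=
        (kerPart p).part_eq_of_mem hB' hxB'
      have : (π.nonempty_of_mem_parts B'.2).choose ∈ (kerPart p).part
          (π.nonempty_of_mem_parts B.2).choose := mem_kerPart_part.mpr hBB'
      have hmem : (π.nonempty_of_mem_parts B'.2).choose ∈ (B : Finset (Fin i)) := e1 ▸ this
      have e3 : (kerPart p).part (π.nonempty_of_mem_parts B'.2).choose = (B : Finset (Fin i)) :=
        (kerPart p).part_eq_of_mem hB hmem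
      exact Subtype.ext (by rw [← e2, e3])
    case hi => intro p hp; exact Finset.mem_univ _
    case hj =>
      intro g _
      rw [Finset.mem_filter]
      constructor
      · rw [Fintype.mem_piFinset]
        intro j
        exact Finset.mem_range.mpr (g ⟨π.part j, π.part_mem.mpr (Finset.mem_univ j)⟩).isLt
      · -- kerPart of this p = π
        set p : Fin i → ℕ :=
          fun j => ((g ⟨π.part j, π.part_mem.mpr (Finset.mem_univ j)⟩ : Fin n) : ℕ) with hpdef
        have hpart : ∀ j, (kerPart p).part j = π.part j := by
          intro j
          rw [kerPart_part_eq]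
          ext b
          simp only [Finset.mem_filter, Finset.mem_univ, true_and]
          constructor
          · intro hpb
            have : π.part b = π.part j := by
              have := g.injective (Fin.val_injective (by exact hpb) :
                g ⟨π.part b, π.part_mem.mpr (Finset.mem_univ b)⟩
                  = g ⟨π.part j, π.part_mem.mpr (Finset.mem_univ j)⟩)
              exact congrArg Subtype.val this
            rw [← this]
            exact π.mem_part (Finset.mem_univ b)
          · intro hb
            have : π.part b = π.part j :=
              (π.mem_part_iff_part_eq_part (Finset.mem_univ b) (Finset.mem_univ j)).mp hb
            show ((g ⟨π.part b, _⟩ : Fin n) : ℕ) = ((g ⟨π.part j, _⟩ : Fin n) : ℕ)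
            congr 2
            exact Subtype.ext this
        ext B
        rw [parts_eq_image_part (kerPart p), parts_eq_image_part π]
        simp only [Finset.mem_image]
        exact ⟨fun ⟨x, hx, hxB⟩ => ⟨x, hx, (hpart x) ▸ hxB⟩,
               fun ⟨x, hx, hxB⟩ => ⟨x, hx, (hpart x).symm ▸ hxB⟩⟩
    case leftinv =>
      intro p hp
      rw [Finset.mem_filter] at hp
      funext j
      have hB : π.part j ∈ π.parts := π.part_mem.mpr (Finset.mem_univ j)
      have hx := (π.nonempty_of_mem_parts hB).choose_spec
      have hkB : π.part j ∈ (kerPart p).parts := hp.2 ▸ hB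
      exact kerPart_const_on hkB hx (π.mem_part (Finset.mem_univ j))
    case rightinv =>
      intro g _
      ext B
      simp only
      have hx := (π.nonempty_of_mem_parts B.2).choose_spec
      have : π.part (π.nonempty_of_mem_parts B.2).choose = B.1 :=
        π.part_eq_of_mem B.2 hx
      congr 1
      exact congrArg g (Subtype.ext this)
  rw [key, Finset.card_univ, Fintype.card_embedding_eq, Fintype.card_fin, Fintype.card_coe]

lemma kerPart_parts (p : Fin i → ℕ) :
    (kerPart p).parts = (univ.image p).image fun c => univ.filter fun j => p j = c := by
  classical
  ext B
  constructor
  · intro hB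
    obtain ⟨x, hx, hxB⟩ := (kerPart p).part_surjOn hB
    refine Finset.mem_image.mpr ⟨p x, Finset.mem_image_of_mem p (Finset.mem_univ x), ?_⟩
    rw [← hxB, kerPart_part_eq]
  · rintro hB
    rw [Finset.mem_image] at hB
    obtain ⟨c, hc, rfl⟩ := hB
    rw [Finset.mem_image] at hc
    obtain ⟨x, -, rfl⟩ := hc
    rw [← kerPart_part_eq]
    exact (kerPart p).part_mem.mpr (Finset.mem_univ x)

lemma prod_image_fibers (p : Fin i → ℕ) (m : ℕ → ℝ) :
    ∏ c ∈ (univ : Finset (Fin i)).image p, m ((univ.filter fun j => p j = c).card)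
      = ∏ B ∈ (kerPart p).parts, m B.card := by
  classical
  have hinj : ∀ c ∈ univ.image p, ∀ d ∈ univ.image p,
      (univ.filter fun j => p j = c) = (univ.filter fun j => p j = d) → c = d := by
    intro c hc d hd hcd
    obtain ⟨j, -, rfl⟩ := Finset.mem_image.mp hc
    have : j ∈ univ.filter fun b => p b = d :=
      hcd ▸ (Finset.mem_filter.mpr ⟨Finset.mem_univ j, rfl⟩)
    exact (Finset.mem_filter.mp this).2
  rw [kerPart_parts, Finset.prod_image hinj]

lemma comb_main (i n : ℕ) (m : ℕ → ℝ) :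
    ∑ p ∈ Fintype.piFinset (fun _ : Fin i => Finset.range n),
        ∏ c ∈ (univ : Finset (Fin i)).image p, m ((univ.filter fun j => p j = c).card)
      = ∑ π : Finpartition (univ : Finset (Fin i)),
          (n.descFactorial π.parts.card : ℝ) * ∏ B ∈ π.parts, m B.card := by
  classical
  rw [← Finset.sum_fiberwise (Fintype.piFinset fun _ : Fin i => Finset.range n) kerPart
    (fun p => ∏ c ∈ (univ : Finset (Fin i)).image p, m ((univ.filter fun j => p j = c).card))]
  refine Finset.sum_congr rfl fun π _ => ?_
  have : ∀ p ∈ (Fintype.piFinset fun _ : Fin i => Finset.range n).filter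
      (fun p => kerPart p = π),
      (∏ c ∈ (univ : Finset (Fin i)).image p, m ((univ.filter fun j => p j = c).card))
        = ∏ B ∈ π.parts, m B.card := by
    intro p hp
    rw [prod_image_fibers, (Finset.mem_filter.mp hp).2]
  rw [Finset.sum_congr rfl this, Finset.sum_const, nsmul_eq_mul, card_kerPart_fiber]

section
variable {Ω : Type*} [MeasurableSpace Ω] {μ : Measure Ω} [IsProbabilityMeasure μ]
    {i : ℕ} {X : ℕ → Ω → ℝ}

lemma moment_integrable (hmeas : ∀ l, Measurable (X l))
    (hident : ∀ l, IdentDistrib (X l) (X 0) μ μ)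
    (hintX : Integrable (fun ω => |X 0 ω| ^ i) μ)
    (c r : ℕ) (hr : r ≤ i) : Integrable (fun ω => X c ω ^ r) μ := by
  have base : Integrable (fun ω => X 0 ω ^ r) μ := by
    have hbound : Integrable (fun ω => 1 + |X 0 ω| ^ i) μ := (integrable_const 1).add hintX
    refine hbound.mono ((hmeas 0).pow_const r).aestronglyMeasurable ?_
    filter_upwards with ω
    have h2 : |X 0 ω| ^ r ≤ 1 + |X 0 ω| ^ i := by
      rcases le_or_gt (|X 0 ω|) 1 with h | h
      · calc |X 0 ω| ^ r ≤ 1 ^ r := pow_le_pow_left₀ (abs_nonneg _) h r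
          _ = 1 := one_pow r
          _ ≤ 1 + |X 0 ω| ^ i := le_add_of_nonneg_right (by positivity)
      · calc |X 0 ω| ^ r ≤ |X 0 ω| ^ i := pow_le_pow_right₀ h.le hr
          _ ≤ 1 + |X 0 ω| ^ i := le_add_of_nonneg_left zero_le_one
    calc ‖X 0 ω ^ r‖ = |X 0 ω| ^ r := by rw [Real.norm_eq_abs, abs_pow]
      _ ≤ 1 + |X 0 ω| ^ i := h2
      _ ≤ ‖1 + |X 0 ω| ^ i‖ := le_abs_self _
  have hid : IdentDistrib (fun ω => X c ω ^ r) (fun ω => X 0 ω ^ r) μ μ :=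
    (hident c).comp (measurable_id.pow_const r)
  exact hid.integrable_iff.mpr base

lemma moment_eq (hident : ∀ l, IdentDistrib (X l) (X 0) μ μ) (c r : ℕ) :
    ∫ ω, X c ω ^ r ∂μ = ∫ ω, X 0 ω ^ r ∂μ :=
  ((hident c).comp (measurable_id.pow_const r)).integral_eq

lemma regroup_prod (p : Fin i → ℕ) (ω : Ω) :
    ∏ j : Fin i, X (p j) ω
      = ∏ c ∈ (univ : Finset (Fin i)).image p, X c ω ^ (univ.filter fun j => p j = c).card := by
  classical
  rw [← Finset.prod_fiberwise_of_maps_to (fun j _ => Finset.mem_image_of_mem p (mem_univ j))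
    (fun j => X (p j) ω)]
  refine Finset.prod_congr rfl fun c _ => ?_
  rw [show (∏ j ∈ univ.filter fun j => p j = c, X (p j) ω) = ∏ j ∈ univ.filter fun j => p j = c,
    X c ω from Finset.prod_congr rfl fun j hj => by rw [(Finset.mem_filter.mp hj).2],
    Finset.prod_const]

lemma fixed_n (hmeas : ∀ l, Measurable (X l))
    (hindep : iIndepFun X μ)
    (hident : ∀ l, IdentDistrib (X l) (X 0) μ μ)
    (hintX : Integrable (fun ω => |X 0 ω| ^ i) μ) (n : ℕ) :
    ∫ ω, (∑ l ∈ Finset.range n, X l ω) ^ i ∂μ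
      = ∑ π : Finpartition (univ : Finset (Fin i)),
          (n.descFactorial π.parts.card : ℝ) * ∏ B ∈ π.parts, ∫ ω, X 0 ω ^ B.card ∂μ := by
  classical
  have hk : ∀ (p : Fin i → ℕ) (c : ℕ), (univ.filter fun j => p j = c).card ≤ i := fun p c =>
    le_trans (Finset.card_filter_le _ _) (by simp)
  have hterm : ∀ p : Fin i → ℕ,
      Integrable (fun ω => ∏ j : Fin i, X (p j) ω) μ ∧
      ∫ ω, ∏ j : Fin i, X (p j) ω ∂μ
        = ∏ c ∈ (univ : Finset (Fin i)).image p,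
            ∫ ω, X 0 ω ^ (univ.filter fun j => p j = c).card ∂μ := by
    intro p
    set k : ℕ → ℕ := fun c => (univ.filter fun j => p j = c).card with hkdef
    have hY : iIndepFun (fun c ω => X c ω ^ k c) μ :=
      hindep.comp (fun c x => x ^ k c) (fun c => measurable_id.pow_const (k c))
    have hYm : ∀ c, Measurable fun ω => X c ω ^ k c := fun c => (hmeas c).pow_const (k c)
    have hYint : ∀ c, Integrable (fun ω => X c ω ^ k c) μ := fun c =>
      moment_integrable hmeas hident hintX c (k c) (hk p c)
    obtain ⟨hint, heq⟩ := indep_integral_prod hYm hY hYint ((univ : Finset (Fin i)).image p)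
    constructor
    · refine (integrable_congr ?_).mpr hint
      filter_upwards with ω
      exact regroup_prod p ω
    · rw [integral_congr_ae (Filter.Eventually.of_forall fun ω => regroup_prod p ω), heq]
      exact Finset.prod_congr rfl fun c _ => moment_eq hident c (k c)
  calc ∫ ω, (∑ l ∈ Finset.range n, X l ω) ^ i ∂μ
      = ∫ ω, ∑ p ∈ Fintype.piFinset (fun _ : Fin i => Finset.range n),
          ∏ j : Fin i, X (p j) ω ∂μ := by
        refine integral_congr_ae (Filter.Eventually.of_forall fun ω => ?_)
        exact Finset.sum_pow' (Finset.range n) (fun l => X l ω) i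
    _ = ∑ p ∈ Fintype.piFinset (fun _ : Fin i => Finset.range n),
          ∫ ω, ∏ j : Fin i, X (p j) ω ∂μ :=
        integral_finset_sum _ fun p _ => (hterm p).1
    _ = ∑ p ∈ Fintype.piFinset (fun _ : Fin i => Finset.range n),
          ∏ c ∈ (univ : Finset (Fin i)).image p,
            ∫ ω, X 0 ω ^ (univ.filter fun j => p j = c).card ∂μ :=
        Finset.sum_congr rfl fun p _ => (hterm p).2
    _ = _ := comb_main i n (fun r => ∫ ω, X 0 ω ^ r ∂μ)
end


lemma regroup_prod' {M : Type*} [CommMonoid M] {i : ℕ} (p : Fin i → ℕ) (f : ℕ → M) :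
    ∏ j : Fin i, f (p j)
      = ∏ c ∈ (univ : Finset (Fin i)).image p, f c ^ (univ.filter fun j => p j = c).card := by
  classical
  rw [← Finset.prod_fiberwise_of_maps_to (fun j _ => Finset.mem_image_of_mem p (mem_univ j))
    (fun j => f (p j))]
  refine Finset.prod_congr rfl fun c _ => ?_
  rw [show (∏ j ∈ univ.filter fun j => p j = c, f (p j)) = ∏ j ∈ univ.filter fun j => p j = c,
    f c from Finset.prod_congr rfl fun j hj => by rw [(Finset.mem_filter.mp hj).2],
    Finset.prod_const]

/-- Let `(X_l)` be i.i.d. real random variables with `E[|X₁|^i] < ∞`, and let `N`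
be an `ℕ`-valued random variable with `E[N^i] < ∞`, independent of the sequence. Then the
randomly stopped sum `S_N = X₁ + ⋯ + X_N` satisfies
`E[S_N^i] = ∑_{π ∈ Π_i} g_{(|π|)} ∏_{B ∈ π} m_{|B|}`, where `g_{(k)} = E[N(N−1)⋯(N−k+1)]` is
the `k`-th factorial moment of `N` and `m_r = E[X₁^r]`. -/
theorem random_sum_moments_via_factorial_moments
    {Ω : Type*} [MeasurableSpace Ω] (μ : Measure Ω) [IsProbabilityMeasure μ]
    (i : ℕ) (hi : 0 < i)
    (X : ℕ → Ω → ℝ) (hmeas : ∀ l, Measurable (X l))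
    (hindep : iIndepFun X μ)
    (hident : ∀ l, IdentDistrib (X l) (X 0) μ μ)
    (N : Ω → ℕ) (hmeasN : Measurable N)
    (hNindep : IndepFun N (fun ω => fun l => X l ω) μ)
    (hintX : Integrable (fun ω => |X 0 ω| ^ i) μ)
    (hintN : Integrable (fun ω => (N ω : ℝ) ^ i) μ) :
    ∫ ω, (∑ l ∈ Finset.range (N ω), X l ω) ^ i ∂μ
      = ∑ π : Finpartition (univ : Finset (Fin i)),
          (∫ ω, ∏ j ∈ Finset.range π.parts.card, ((N ω : ℝ) - (j : ℝ)) ∂μ) *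
            ∏ B ∈ π.parts, ∫ ω, X 0 ω ^ B.card ∂μ := by
  classical
  set Y : Ω → (ℕ → ℝ) := fun ω l => X l ω with hYdef
  have hYm : Measurable Y := measurable_pi_lambda _ hmeas
  set ρ : Measure ℕ := μ.map N with hρdef
  set ν : Measure (ℕ → ℝ) := μ.map Y with hνdef
  haveI : IsProbabilityMeasure ρ := Measure.isProbabilityMeasure_map hmeasN.aemeasurable
  haveI : IsProbabilityMeasure ν := Measure.isProbabilityMeasure_map hYm.aemeasurable
  have hmap : μ.map (fun ω => (N ω, Y ω)) = ρ.prod ν :=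
    (indepFun_iff_map_prod_eq_prod_map_map hmeasN.aemeasurable hYm.aemeasurable).mp hNindep
  set G : ℕ × (ℕ → ℝ) → ℝ := fun q => (∑ l ∈ Finset.range q.1, q.2 l) ^ i with hGdef
  have hsum_meas : ∀ n : ℕ, Measurable fun x : ℕ → ℝ => (∑ l ∈ Finset.range n, x l) ^ i :=
    fun n => (Finset.measurable_sum _ fun l _ => measurable_pi_apply l).pow_const i
  have hGm : Measurable G := by
    have : Measurable fun q : (ℕ → ℝ) × ℕ => (∑ l ∈ Finset.range q.2, q.1 l) ^ i :=
      measurable_from_prod_countable_left fun n => hsum_meas n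
    exact this.comp measurable_swap
  -- the constant C
  set C : ℝ≥0∞ := 1 + ∫⁻ ω, (‖X 0 ω‖₊ : ℝ≥0∞) ^ i ∂μ with hCdef
  have hC1 : 1 ≤ C := le_self_add
  have hCt : C ≠ ∞ := by
    have h : ∫⁻ ω, (‖|X 0 ω| ^ i‖₊ : ℝ≥0∞) ∂μ < ⊤ := hintX.2
    have heq : ∀ ω, (‖|X 0 ω| ^ i‖₊ : ℝ≥0∞) = (‖X 0 ω‖₊ : ℝ≥0∞) ^ i := by
      intro ω; rw [nnnorm_pow, Real.nnnorm_abs]; push_cast; ring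
    rw [lintegral_congr heq] at h
    simp only [hCdef]
    exact ENNReal.add_ne_top.mpr ⟨one_ne_top, h.ne⟩
  -- key moment bound
  have hmom_le : ∀ k : ℕ, k ≤ i → ∫⁻ ω, (‖X 0 ω‖₊ : ℝ≥0∞) ^ k ∂μ ≤ C := by
    intro k hk
    calc ∫⁻ ω, (‖X 0 ω‖₊ : ℝ≥0∞) ^ k ∂μ
        ≤ ∫⁻ ω, 1 + (‖X 0 ω‖₊ : ℝ≥0∞) ^ i ∂μ := by
          refine lintegral_mono fun ω => ?_
          rcases le_total ((‖X 0 ω‖₊ : ℝ≥0∞)) 1 with h | h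
          · exact le_trans (pow_le_one' h k) le_self_add
          · exact le_trans (pow_le_pow_right' h hk) le_add_self
      _ = C := by
          rw [lintegral_add_left measurable_const, lintegral_one, measure_univ]
  -- lintegral bound for fixed n
  have hgood : ∀ n : ℕ, ∫⁻ ω, (‖(∑ l ∈ Finset.range n, X l ω) ^ i‖₊ : ℝ≥0∞) ∂μ
      ≤ (n : ℝ≥0∞) ^ i * C ^ i := by
    intro n
    set g : ℕ → Ω → ℝ≥0∞ := fun c ω => (‖X c ω‖₊ : ℝ≥0∞) with hgdef
    have hgm : ∀ c, Measurable (g c) := fun c => (hmeas c).nnnorm.coe_nnreal_ennreal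
    have step1 : ∀ ω, (‖(∑ l ∈ Finset.range n, X l ω) ^ i‖₊ : ℝ≥0∞)
        ≤ (∑ l ∈ Finset.range n, g l ω) ^ i := by
      intro ω
      rw [nnnorm_pow]
      push_cast
      refine pow_le_pow_left' ?_ i
      calc (‖∑ l ∈ Finset.range n, X l ω‖₊ : ℝ≥0∞)
          ≤ ((∑ l ∈ Finset.range n, ‖X l ω‖₊ : ℝ≥0) : ℝ≥0∞) := by
            exact_mod_cast nnnorm_sum_le _ _
        _ = ∑ l ∈ Finset.range n, g l ω := by push_cast; rfl
    have hik : ∀ (p : Fin i → ℕ) (c : ℕ), (univ.filter fun j => p j = c).card ≤ i := fun p c =>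
      le_trans (Finset.card_filter_le _ _) (by simp)
    calc ∫⁻ ω, (‖(∑ l ∈ Finset.range n, X l ω) ^ i‖₊ : ℝ≥0∞) ∂μ
        ≤ ∫⁻ ω, (∑ l ∈ Finset.range n, g l ω) ^ i ∂μ := lintegral_mono step1
      _ = ∫⁻ ω, ∑ p ∈ Fintype.piFinset (fun _ : Fin i => Finset.range n),
            ∏ j : Fin i, g (p j) ω ∂μ := by
          refine lintegral_congr fun ω => ?_
          exact Finset.sum_pow' (Finset.range n) (fun l => g l ω) i
      _ = ∑ p ∈ Fintype.piFinset (fun _ : Fin i => Finset.range n),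
            ∫⁻ ω, ∏ j : Fin i, g (p j) ω ∂μ := by
          refine lintegral_finset_sum _ fun p _ => ?_
          exact Finset.measurable_prod _ fun j _ => hgm (p j)
      _ ≤ ∑ p ∈ Fintype.piFinset (fun _ : Fin i => Finset.range n), C ^ i := by
          refine Finset.sum_le_sum fun p _ => ?_
          set k : ℕ → ℕ := fun c => (univ.filter fun j => p j = c).card with hkdef
          have hregr : ∀ ω, ∏ j : Fin i, g (p j) ω = ∏ c ∈ (univ : Finset (Fin i)).image p,
              g c ω ^ k c := fun ω => regroup_prod' p (fun c => g c ω)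
          have hYind : iIndepFun (fun c ω => g c ω ^ k c) μ :=
            hindep.comp (fun c x => (‖x‖₊ : ℝ≥0∞) ^ k c)
              (fun c => (measurable_nnnorm.coe_nnreal_ennreal).pow_const (k c))
          have hYgm : ∀ c, Measurable fun ω => g c ω ^ k c := fun c => (hgm c).pow_const (k c)
          rw [lintegral_congr hregr, indep_lintegral_prod hYgm hYind]
          have hone : ∀ c ∈ (univ : Finset (Fin i)).image p, ∫⁻ ω, g c ω ^ k c ∂μ ≤ C := by
            intro c _
            have hident' : ∫⁻ ω, g c ω ^ k c ∂μ = ∫⁻ ω, g 0 ω ^ k c ∂μ := by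
              have h1 : ∫⁻ ω, g c ω ^ k c ∂μ
                  = ∫⁻ x, (‖x‖₊ : ℝ≥0∞) ^ k c ∂(μ.map (X c)) := by
                rw [lintegral_map ((measurable_nnnorm.coe_nnreal_ennreal).pow_const _) (hmeas c)]
              have h2 : ∫⁻ ω, g 0 ω ^ k c ∂μ
                  = ∫⁻ x, (‖x‖₊ : ℝ≥0∞) ^ k c ∂(μ.map (X 0)) := by
                rw [lintegral_map ((measurable_nnnorm.coe_nnreal_ennreal).pow_const _) (hmeas 0)]
              rw [h1, h2, (hident c).map_eq]
            rw [hident']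
            exact hmom_le (k c) (hik p c)
          calc ∏ c ∈ (univ : Finset (Fin i)).image p, ∫⁻ ω, g c ω ^ k c ∂μ
              ≤ ∏ c ∈ (univ : Finset (Fin i)).image p, C := Finset.prod_le_prod' hone
            _ = C ^ ((univ : Finset (Fin i)).image p).card := Finset.prod_const C
            _ ≤ C ^ i := pow_le_pow_right' hC1
                (le_trans (Finset.card_image_le) (by simp))
      _ = (n : ℝ≥0∞) ^ i * C ^ i := by
          rw [Finset.sum_const, Fintype.card_piFinset]
          simp [mul_comm]
  -- integrability of G under the product measure
  have hGmnn : Measurable fun q : ℕ × (ℕ → ℝ) => (‖G q‖₊ : ℝ≥0∞) :=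
    hGm.nnnorm.coe_nnreal_ennreal
  have hNfin : ∫⁻ n, (n : ℝ≥0∞) ^ i ∂ρ < ⊤ := by
    rw [hρdef, lintegral_map measurable_from_nat hmeasN]
    have h : ∫⁻ ω, (‖(N ω : ℝ) ^ i‖₊ : ℝ≥0∞) ∂μ < ⊤ := hintN.2
    have heq : ∀ ω, (‖(N ω : ℝ) ^ i‖₊ : ℝ≥0∞) = ((N ω : ℝ≥0∞)) ^ i := by
      intro ω
      rw [nnnorm_pow]
      push_cast [Real.nnnorm_natCast]
      ring
    rwa [lintegral_congr heq] at h
  have hGint : Integrable G (ρ.prod ν) := by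
    refine ⟨hGm.aestronglyMeasurable, ?_⟩
    have hfi : ∫⁻ q, (‖G q‖₊ : ℝ≥0∞) ∂(ρ.prod ν) < ⊤ := by
      rw [lintegral_prod _ hGmnn.aemeasurable]
      have hinner : ∀ n : ℕ, ∫⁻ x, (‖G (n, x)‖₊ : ℝ≥0∞) ∂ν ≤ (n : ℝ≥0∞) ^ i * C ^ i := by
        intro n
        have hmx : Measurable fun x : ℕ → ℝ => (‖(∑ l ∈ Finset.range n, x l) ^ i‖₊ : ℝ≥0∞) :=
          (hsum_meas n).nnnorm.coe_nnreal_ennreal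
        rw [hνdef, lintegral_map hmx hYm]
        exact hgood n
      calc ∫⁻ n, ∫⁻ x, (‖G (n, x)‖₊ : ℝ≥0∞) ∂ν ∂ρ
          ≤ ∫⁻ n, (n : ℝ≥0∞) ^ i * C ^ i ∂ρ := lintegral_mono hinner
        _ = (∫⁻ n, (n : ℝ≥0∞) ^ i ∂ρ) * C ^ i := lintegral_mul_const _ measurable_from_nat
        _ < ⊤ := ENNReal.mul_lt_top hNfin (ENNReal.pow_lt_top hCt.lt_top)
    exact hfi
  have hN2 : AEMeasurable (fun ω => (N ω, Y ω)) μ := (hmeasN.prodMk hYm).aemeasurable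
  have key : ∫ ω, (∑ l ∈ Finset.range (N ω), X l ω) ^ i ∂μ
      = ∫ n, ∑ π : Finpartition (univ : Finset (Fin i)),
          (n.descFactorial π.parts.card : ℝ) * ∏ B ∈ π.parts, ∫ ω, X 0 ω ^ B.card ∂μ ∂ρ := by
    calc ∫ ω, (∑ l ∈ Finset.range (N ω), X l ω) ^ i ∂μ
        = ∫ ω, G (N ω, Y ω) ∂μ := rfl
      _ = ∫ q, G q ∂(μ.map fun ω => (N ω, Y ω)) :=
          (integral_map hN2 hGm.aestronglyMeasurable).symm
      _ = ∫ q, G q ∂(ρ.prod ν) := by rw [hmap]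
      _ = ∫ n, ∫ x, G (n, x) ∂ν ∂ρ := integral_prod _ hGint
      _ = _ := by
          refine integral_congr_ae (Filter.Eventually.of_forall fun n => ?_)
          show ∫ x, G (n, x) ∂ν = _
          have h1 : ∫ x, G (n, x) ∂ν = ∫ ω, (∑ l ∈ Finset.range n, X l ω) ^ i ∂μ := by
            rw [hνdef, integral_map hYm.aemeasurable (hsum_meas n).aestronglyMeasurable]
          rw [h1, fixed_n hmeas hindep hident hintX n]
  have hkle : ∀ π : Finpartition (univ : Finset (Fin i)), π.parts.card ≤ i := fun π =>
    le_trans π.card_parts_le_card (by simp)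
  have hNi : Integrable (fun n : ℕ => (n : ℝ) ^ i) ρ := by
    rw [hρdef, integrable_map_measure measurable_from_nat.aestronglyMeasurable
      hmeasN.aemeasurable]
    exact hintN
  have hdesc : ∀ k : ℕ, k ≤ i → Integrable (fun n : ℕ => (n.descFactorial k : ℝ)) ρ := by
    intro k hk
    refine ((integrable_const (1 : ℝ)).add hNi).mono
      measurable_from_nat.aestronglyMeasurable ?_
    filter_upwards with n
    have h1 : (n.descFactorial k : ℝ) ≤ (n : ℝ) ^ k := by
      rw [← Nat.cast_pow]
      exact_mod_cast Nat.descFactorial_le_pow n k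
    have h2 : (n : ℝ) ^ k ≤ 1 + (n : ℝ) ^ i := by
      rcases Nat.eq_zero_or_pos n with rfl | hn
      · rcases Nat.eq_zero_or_pos k with rfl | hkpos
        · simp
        · simp [zero_pow hkpos.ne', zero_pow hi.ne']
      · have hn1 : (1 : ℝ) ≤ (n : ℝ) := by exact_mod_cast hn
        calc (n : ℝ) ^ k ≤ (n : ℝ) ^ i := pow_le_pow_right₀ hn1 hk
          _ ≤ 1 + (n : ℝ) ^ i := le_add_of_nonneg_left zero_le_one
    calc ‖(n.descFactorial k : ℝ)‖ = (n.descFactorial k : ℝ) := by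
          rw [Real.norm_eq_abs, abs_of_nonneg (by positivity)]
      _ ≤ 1 + (n : ℝ) ^ i := le_trans h1 h2
      _ ≤ ‖1 + (n : ℝ) ^ i‖ := le_abs_self _
  have hdescInt : ∀ k : ℕ, ∫ ω, ∏ j ∈ Finset.range k, ((N ω : ℝ) - (j : ℝ)) ∂μ
      = ∫ n, (n.descFactorial k : ℝ) ∂ρ := by
    intro k
    rw [hρdef, integral_map hmeasN.aemeasurable measurable_from_nat.aestronglyMeasurable]
    refine integral_congr_ae (Filter.Eventually.of_forall fun ω => ?_)
    exact (descFactorial_cast_real (N ω) k).symm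
  calc ∫ ω, (∑ l ∈ Finset.range (N ω), X l ω) ^ i ∂μ
      = ∫ n, ∑ π : Finpartition (univ : Finset (Fin i)),
          (n.descFactorial π.parts.card : ℝ) * ∏ B ∈ π.parts, ∫ ω, X 0 ω ^ B.card ∂μ ∂ρ := key
    _ = ∑ π : Finpartition (univ : Finset (Fin i)),
          ∫ n, (n.descFactorial π.parts.card : ℝ) * ∏ B ∈ π.parts, ∫ ω, X 0 ω ^ B.card ∂μ ∂ρ :=
        integral_finset_sum _ fun π _ => (hdesc π.parts.card (hkle π)).mul_const _
    _ = ∑ π : Finpartition (univ : Finset (Fin i)),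
          (∫ n, (n.descFactorial π.parts.card : ℝ) ∂ρ) * ∏ B ∈ π.parts, ∫ ω, X 0 ω ^ B.card ∂μ :=
        Finset.sum_congr rfl fun π _ => integral_mul_const _ _
    _ = _ := Finset.sum_congr rfl fun π _ => by rw [← hdescInt]
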